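/- Let L, η ∈ ℂ with Re(L) ≥ 1/2, Im(L) ≥ 1, and (1 + Im(L) + |η|)² ≤ (Re(L) − 1/2)². Then for all x, y ∈ (−1,1) with x²+y²<1 and all ρ, σ, μ ∈ ℝ satisfying μ + σ ≤ 0 and σ ≤ −(1+ρ²)/2, one has (μ + σ) + (2Re(L) − 1)σ − (2xy − 2y·Re(η) − 2x·Im(η) − 2Im(L))ρ < 0. -/

import Mathlib

set_option maxHeartbeats 1000000

/-- admissibility inequality for Re Ψ(ρi, σ, μ+iν; x+iy) < 0. -/
theorem admissibility_one (L η : ℂ) (hL : (1 : ℝ) / 2 ≤ L.re) (hLim : 1 ≤ L.im)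
    (hcond : (1 + L.im + ‖η‖) ^ 2 ≤ (L.re - 1 / 2) ^ 2)
    (x y : ℝ) (hx : x ∈ Set.Ioo (-1 : ℝ) 1) (hy : y ∈ Set.Ioo (-1 : ℝ) 1)
    (hxy : x ^ 2 + y ^ 2 < 1)
    (ρ σ μ : ℝ) (hμσ : μ + σ ≤ 0) (hσ : σ ≤ -(1 + ρ ^ 2) / 2) :
    (μ + σ) + (2 * L.re - 1) * σ
      - (2 * x * y - 2 * y * η.re - 2 * x * η.im - 2 * L.im) * ρ < 0 := by
  obtain ⟨hx1, hx2⟩ := hx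
  obtain ⟨hy1, hy2⟩ := hy
  have hη : (0:ℝ) ≤ ‖η‖ := norm_nonneg η
  have hsq : η.re^2 + η.im^2 = (‖η‖)^2 := by
    rw [Complex.sq_norm, Complex.normSq_apply]; ring
  have hC : 1 + L.im + ‖η‖ ≤ L.re - 1/2 := by nlinarith
  have ht2 : (y*η.re + x*η.im)^2 ≤ (‖η‖)^2 := by
    nlinarith [sq_nonneg (y*η.im - x*η.re), sq_nonneg η.re, sq_nonneg η.im,
      sq_nonneg (y*η.re + x*η.im)]
  have ht : |y*η.re + x*η.im| ≤ ‖η‖ := by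
    rw [abs_le]
    constructor <;> nlinarith [abs_nonneg (y*η.re + x*η.im)]
  have h1 := abs_le.mp ht
  have hxy2 : 2*x*y < 1 := by nlinarith [sq_nonneg (x-y)]
  have hxy3 : -(2*x*y) < 1 := by nlinarith [sq_nonneg (x+y)]
  have ha : 2 + 2*L.im + 2*‖η‖ ≤ 2*L.re - 1 := by linarith
  set b := 2*x*y - 2*y*η.re - 2*x*η.im - 2*L.im with hb
  clear_value b
  have habs : |b| < 2*L.re - 1 := by
    rw [abs_lt]
    constructor <;> (rw [hb]; linarith [h1.1, h1.2])
  have hρ : |ρ| ≤ (1+ρ^2)/2 := by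
    nlinarith [sq_nonneg (|ρ| - 1), sq_abs ρ, abs_nonneg ρ]
  have hbρ : -(b*ρ) ≤ |b| * ((1+ρ^2)/2) :=
    calc -(b*ρ) ≤ |b*ρ| := neg_le_abs _
    _ = |b| * |ρ| := abs_mul b ρ
    _ ≤ |b| * ((1+ρ^2)/2) := mul_le_mul_of_nonneg_left hρ (abs_nonneg b)
  have hA : (0:ℝ) < 2*L.re - 1 := by linarith
  have h2 : (0:ℝ) < (1+ρ^2)/2 := by positivity
  have h3 : |b| * ((1+ρ^2)/2) < (2*L.re - 1) * ((1+ρ^2)/2) :=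
    mul_lt_mul_of_pos_right habs h2
  have h4 : (2*L.re - 1) * σ ≤ (2*L.re - 1) * (-(1+ρ^2)/2) :=
    mul_le_mul_of_nonneg_left hσ hA.le
  have h5 : (2*L.re - 1) * (-(1+ρ^2)/2) = -((2*L.re - 1) * ((1+ρ^2)/2)) := by ring
  linarith [h3, h4, hbρ, hμσ, h5]
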